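/- For every t ∈ [0,1) and every x ∈ ℝ^d, the function log φ_t is twice differentiable at x and its Hessian satisfies ∇²_x log φ_t(x) = −(1/(1−t²)) I_d + (t²/(1−t²)²) Cov_t(x). -/

import Mathlib

open MeasureTheory

/-- The Gaussian kernel `g_t(x, x₁) = exp(-‖x - t x₁‖² / (2(1-t²)))`. -/
noncomputable def gKer (d : ℕ) (t : ℝ) (x x₁ : EuclideanSpace ℝ (Fin d)) : ℝ :=
  Real.exp (-‖x - t • x₁‖ ^ 2 / (2 * (1 - t ^ 2)))

/-- `φ_t(x) = ∫ g_t(x, x₁) dπ₁(x₁)`. -/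
noncomputable def phiFn (d : ℕ) (π₁ : MeasureTheory.Measure (EuclideanSpace ℝ (Fin d))) (t : ℝ)
    (x : EuclideanSpace ℝ (Fin d)) : ℝ :=
  ∫ x₁, gKer d t x x₁ ∂π₁

/-- `m_t(x) = φ_t(x)⁻¹ ∫ x₁ g_t(x, x₁) dπ₁(x₁)`. -/
noncomputable def mFn (d : ℕ) (π₁ : MeasureTheory.Measure (EuclideanSpace ℝ (Fin d))) (t : ℝ)
    (x : EuclideanSpace ℝ (Fin d)) : EuclideanSpace ℝ (Fin d) :=
  (phiFn d π₁ t x)⁻¹ • ∫ x₁, gKer d t x x₁ • x₁ ∂π₁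

/-- The velocity field `v*(x, t) = (1/(1-t²)) m_t(x) - (t/(1-t²)) x`. -/
noncomputable def vStar (d : ℕ) (π₁ : MeasureTheory.Measure (EuclideanSpace ℝ (Fin d)))
    (x : EuclideanSpace ℝ (Fin d)) (t : ℝ) : EuclideanSpace ℝ (Fin d) :=
  (1 / (1 - t ^ 2)) • mFn d π₁ t x - (t / (1 - t ^ 2)) • x

/-- `M_t(x) = φ_t(x)⁻¹ ∫ x₁ x₁ᵀ g_t(x, x₁) dπ₁(x₁)` as a `d × d` matrix. -/
noncomputable def MMat (d : ℕ) (π₁ : MeasureTheory.Measure (EuclideanSpace ℝ (Fin d))) (t : ℝ)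
    (x : EuclideanSpace ℝ (Fin d)) : Matrix (Fin d) (Fin d) ℝ :=
  Matrix.of fun i j => (phiFn d π₁ t x)⁻¹ * ∫ x₁, gKer d t x x₁ * (x₁ i * x₁ j) ∂π₁

/-- The conditional covariance `Cov_t(x) = M_t(x) - m_t(x) m_t(x)ᵀ`. -/
noncomputable def covMat (d : ℕ) (π₁ : MeasureTheory.Measure (EuclideanSpace ℝ (Fin d))) (t : ℝ)
    (x : EuclideanSpace ℝ (Fin d)) : Matrix (Fin d) (Fin d) ℝ :=
  MMat d π₁ t x - Matrix.of fun i j => mFn d π₁ t x i * mFn d π₁ t x j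

/-! ### Auxiliary definitions and lemmas -/

/-- Derivative (in `x`) of the Gaussian kernel. -/
noncomputable def Dg (d : ℕ) (t : ℝ) (y x₁ : EuclideanSpace ℝ (Fin d)) :
    EuclideanSpace ℝ (Fin d) →L[ℝ] ℝ :=
  (-(1 - t ^ 2)⁻¹ * gKer d t y x₁) • innerSL ℝ (y - t • x₁)

/-- The integral `∫ x₁, g • x₁`. -/
noncomputable def IFn (d : ℕ) (π₁ : MeasureTheory.Measure (EuclideanSpace ℝ (Fin d))) (t : ℝ)
    (y : EuclideanSpace ℝ (Fin d)) : EuclideanSpace ℝ (Fin d) :=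
  ∫ x₁, gKer d t y x₁ • x₁ ∂π₁

lemma hasFDerivAt_gKer {d : ℕ} (t : ℝ) (x₁ y : EuclideanSpace ℝ (Fin d)) :
    HasFDerivAt (fun z => gKer d t z x₁) (Dg d t y x₁) y := by
  have h1 : HasFDerivAt (fun z : EuclideanSpace ℝ (Fin d) => z - t • x₁)
      (ContinuousLinearMap.id ℝ _) y := (hasFDerivAt_id y).sub_const _
  have h3 := ((h1.inner ℝ h1).const_mul (-(2 * (1 - t ^ 2))⁻¹)).exp
  have heq : ∀ z : EuclideanSpace ℝ (Fin d),
      Real.exp (-(2 * (1 - t ^ 2))⁻¹ * (inner ℝ (z - t • x₁) (z - t • x₁) : ℝ))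
      = gKer d t z x₁ := by
    intro z
    rw [real_inner_self_eq_norm_sq]
    unfold gKer
    ring_nf
  have h3' : HasFDerivAt (fun z => gKer d t z x₁)
      (Real.exp (-(2 * (1 - t ^ 2))⁻¹ * (inner ℝ (y - t • x₁) (y - t • x₁) : ℝ)) •
        -(2 * (1 - t ^ 2))⁻¹ •
          (fderivInnerCLM ℝ (y - t • x₁, y - t • x₁)).comp
            ((ContinuousLinearMap.id ℝ _).prod (ContinuousLinearMap.id ℝ _))) y := by
    refine HasFDerivAt.congr_of_eventuallyEq h3 ?_
    filter_upwards with z using (heq z).symm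
  refine h3'.congr_fderiv ?_
  symm
  rw [heq y]
  ext v
  simp only [Dg, ContinuousLinearMap.smul_apply, innerSL_apply_apply, ContinuousLinearMap.coe_smul',
    Pi.smul_apply, ContinuousLinearMap.coe_comp', Function.comp_apply, fderivInnerCLM_apply,
    ContinuousLinearMap.prod_apply, ContinuousLinearMap.coe_id', id_eq, smul_eq_mul]
  rw [real_inner_comm (y - t • x₁) v]
  rw [show (2 * (1 - t ^ 2))⁻¹ = 2⁻¹ * (1 - t ^ 2)⁻¹ from mul_inv _ _]
  ring

lemma gKer_pos {d : ℕ} (t : ℝ) (y x₁ : EuclideanSpace ℝ (Fin d)) : 0 < gKer d t y x₁ :=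
  Real.exp_pos _

lemma gKer_le_one {d : ℕ} {t : ℝ} (hb : 0 < 1 - t ^ 2) (y x₁ : EuclideanSpace ℝ (Fin d)) :
    gKer d t y x₁ ≤ 1 := by
  unfold gKer
  rw [Real.exp_le_one_iff]
  apply div_nonpos_of_nonpos_of_nonneg
  · simp [sq_nonneg]
  · positivity

lemma continuous_gKer {d : ℕ} (t : ℝ) (y : EuclideanSpace ℝ (Fin d)) :
    Continuous (fun x₁ => gKer d t y x₁) := by
  unfold gKer
  fun_prop

lemma continuous_Dg {d : ℕ} (t : ℝ) (y : EuclideanSpace ℝ (Fin d)) :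
    Continuous (fun x₁ => Dg d t y x₁) := by
  unfold Dg
  apply Continuous.fun_smul
  · exact (continuous_const.mul (continuous_gKer t y))
  · exact (innerSL ℝ).continuous.comp (continuous_const.sub (continuous_const_smul t))

/-- Basic scalar bound: `c r e^{-c r²/2} ≤ √c`. Stated with `b = c⁻¹`. -/
lemma aux_bound {b : ℝ} (hb : 0 < b) (r : ℝ) (hr : 0 ≤ r) :
    b⁻¹ * r * Real.exp (-r ^ 2 / (2 * b)) ≤ Real.sqrt b⁻¹ := by
  have hs : -r ^ 2 / (2 * b) = -(b⁻¹ * r ^ 2 / 2) := by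
    field_simp
  rw [hs]
  set c : ℝ := b⁻¹ with hc_def
  have hc : 0 < c := inv_pos.mpr hb
  set s : ℝ := c * r ^ 2 / 2 with hs_def
  have hs0 : 0 ≤ s := by positivity
  have hE0 : 0 ≤ Real.exp (-s) := (Real.exp_pos _).le
  have hE1 : Real.exp (-s) * (1 + s) ≤ 1 := by
    have h1 : 1 + s ≤ Real.exp s := by
      have := Real.add_one_le_exp s; linarith
    calc Real.exp (-s) * (1 + s) ≤ Real.exp (-s) * Real.exp s :=
          mul_le_mul_of_nonneg_left h1 hE0
      _ = 1 := by rw [← Real.exp_add]; simp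
  have h5 : c * r ≤ Real.sqrt c * (1 + s) := by
    have h6 := Real.sq_sqrt hc.le
    have h7 := Real.sqrt_nonneg c
    nlinarith [mul_nonneg h7 (sq_nonneg (Real.sqrt c * r - 1)), sq_nonneg (Real.sqrt c * r - 1)]
  calc c * r * Real.exp (-s) ≤ (Real.sqrt c * (1 + s)) * Real.exp (-s) :=
        mul_le_mul_of_nonneg_right h5 hE0
    _ = Real.sqrt c * (Real.exp (-s) * (1 + s)) := by ring
    _ ≤ Real.sqrt c * 1 := mul_le_mul_of_nonneg_left hE1 (Real.sqrt_nonneg c)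
    _ = Real.sqrt c := mul_one _

lemma norm_Dg_le {d : ℕ} {t : ℝ} (hb : 0 < 1 - t ^ 2) (y x₁ : EuclideanSpace ℝ (Fin d)) :
    ‖Dg d t y x₁‖ ≤ Real.sqrt (1 - t ^ 2)⁻¹ := by
  have hg := gKer_pos t y x₁
  have hnorm : ‖Dg d t y x₁‖
      = (1 - t ^ 2)⁻¹ * ‖y - t • x₁‖ * gKer d t y x₁ := by
    rw [Dg, norm_smul (β := EuclideanSpace ℝ (Fin d) →L[ℝ] ℝ), innerSL_apply_norm,
      Real.norm_eq_abs, abs_mul, abs_neg, abs_of_pos (inv_pos.mpr hb), abs_of_pos hg]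
    ring
  rw [hnorm]
  exact aux_bound hb ‖y - t • x₁‖ (norm_nonneg _)

lemma norm_le_sqrt_dim {d : ℕ} {x₁ : EuclideanSpace ℝ (Fin d)}
    (h : ∀ i, x₁ i ∈ Set.Icc (0 : ℝ) 1) : ‖x₁‖ ≤ Real.sqrt d := by
  rw [EuclideanSpace.norm_eq]
  apply Real.sqrt_le_sqrt
  calc ∑ i, ‖x₁ i‖ ^ 2 ≤ ∑ _i : Fin d, (1 : ℝ) := by
        apply Finset.sum_le_sum
        intro i _
        have h1 := (h i).1
        have h2 := (h i).2
        rw [Real.norm_eq_abs, sq_abs]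
        nlinarith
    _ = d := by simp

section Integrability

variable {d : ℕ} {t : ℝ} (π₁ : Measure (EuclideanSpace ℝ (Fin d))) [IsProbabilityMeasure π₁]

lemma integrable_gKer (hb : 0 < 1 - t ^ 2) (y : EuclideanSpace ℝ (Fin d)) :
    Integrable (fun x₁ => gKer d t y x₁) π₁ := by
  refine Integrable.mono' (integrable_const 1) (continuous_gKer t y).aestronglyMeasurable ?_
  filter_upwards with x₁
  rw [Real.norm_eq_abs, abs_of_pos (gKer_pos t y x₁)]
  exact gKer_le_one hb y x₁

lemma integrable_gMul (hb : 0 < 1 - t ^ 2)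
    (hsupp : ∀ᵐ x₁ ∂π₁, ∀ i, x₁ i ∈ Set.Icc (0 : ℝ) 1)
    (y : EuclideanSpace ℝ (Fin d)) (i : Fin d) :
    Integrable (fun x₁ => gKer d t y x₁ * x₁ i) π₁ := by
  refine Integrable.mono' (integrable_const 1)
    (((continuous_gKer t y).mul (EuclideanSpace.proj i).continuous).aestronglyMeasurable) ?_
  filter_upwards [hsupp] with x₁ hx₁
  rw [Real.norm_eq_abs, abs_mul, abs_of_pos (gKer_pos t y x₁)]
  have h1 := (hx₁ i).1
  have h2 := (hx₁ i).2
  have := gKer_le_one hb y x₁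
  have := gKer_pos t y x₁
  rw [abs_of_nonneg h1]
  nlinarith

lemma integrable_gMul2 (hb : 0 < 1 - t ^ 2)
    (hsupp : ∀ᵐ x₁ ∂π₁, ∀ i, x₁ i ∈ Set.Icc (0 : ℝ) 1)
    (y : EuclideanSpace ℝ (Fin d)) (i j : Fin d) :
    Integrable (fun x₁ => gKer d t y x₁ * (x₁ i * x₁ j)) π₁ := by
  refine Integrable.mono' (integrable_const 1)
    (((continuous_gKer t y).mul
      ((EuclideanSpace.proj i).continuous.mul (EuclideanSpace.proj j).continuous))
      |>.aestronglyMeasurable) ?_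
  filter_upwards [hsupp] with x₁ hx₁
  rw [Real.norm_eq_abs, abs_mul, abs_of_pos (gKer_pos t y x₁), abs_mul]
  have hi1 := (hx₁ i).1; have hi2 := (hx₁ i).2
  have hj1 := (hx₁ j).1; have hj2 := (hx₁ j).2
  have := gKer_le_one hb y x₁
  have := gKer_pos t y x₁
  rw [abs_of_nonneg hi1, abs_of_nonneg hj1]
  have hij0 : 0 ≤ x₁ i * x₁ j := mul_nonneg hi1 hj1
  have hij : x₁ i * x₁ j ≤ 1 := by nlinarith
  nlinarith

lemma integrable_gSmul (hb : 0 < 1 - t ^ 2)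
    (hsupp : ∀ᵐ x₁ ∂π₁, ∀ i, x₁ i ∈ Set.Icc (0 : ℝ) 1)
    (y : EuclideanSpace ℝ (Fin d)) :
    Integrable (fun x₁ => gKer d t y x₁ • x₁) π₁ := by
  refine Integrable.mono' (integrable_const (Real.sqrt d))
    (((continuous_gKer t y).smul continuous_id).aestronglyMeasurable) ?_
  filter_upwards [hsupp] with x₁ hx₁
  rw [norm_smul, Real.norm_eq_abs, abs_of_pos (gKer_pos t y x₁)]
  calc gKer d t y x₁ * ‖x₁‖ ≤ 1 * ‖x₁‖ :=
        mul_le_mul_of_nonneg_right (gKer_le_one hb y x₁) (norm_nonneg _)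
    _ = ‖x₁‖ := one_mul _
    _ ≤ Real.sqrt d := norm_le_sqrt_dim hx₁

lemma integrable_Dg (hb : 0 < 1 - t ^ 2) (y : EuclideanSpace ℝ (Fin d)) :
    Integrable (fun x₁ => Dg d t y x₁) π₁ := by
  refine Integrable.mono' (integrable_const (Real.sqrt (1 - t ^ 2)⁻¹))
    ((continuous_Dg t y).aestronglyMeasurable) ?_
  filter_upwards with x₁ using norm_Dg_le hb y x₁

lemma integrable_DgSmulRight (hb : 0 < 1 - t ^ 2)
    (hsupp : ∀ᵐ x₁ ∂π₁, ∀ i, x₁ i ∈ Set.Icc (0 : ℝ) 1)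
    (y : EuclideanSpace ℝ (Fin d)) :
    Integrable (fun x₁ => (Dg d t y x₁).smulRight x₁) π₁ := by
  refine Integrable.mono' (integrable_const (Real.sqrt (1 - t ^ 2)⁻¹ * Real.sqrt d))
    (((ContinuousLinearMap.smulRightL ℝ (EuclideanSpace ℝ (Fin d))
        (EuclideanSpace ℝ (Fin d))).continuous₂.comp
      ((continuous_Dg t y).prodMk continuous_id)).aestronglyMeasurable) ?_
  filter_upwards [hsupp] with x₁ hx₁
  rw [ContinuousLinearMap.norm_smulRight_apply]
  exact mul_le_mul (norm_Dg_le hb y x₁) (norm_le_sqrt_dim hx₁) (norm_nonneg _)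
    (Real.sqrt_nonneg _)

lemma phi_pos (y : EuclideanSpace ℝ (Fin d)) (hb : 0 < 1 - t ^ 2) :
    0 < phiFn d π₁ t y := by
  rw [phiFn]
  rw [integral_pos_iff_support_of_nonneg_ae
    (Filter.Eventually.of_forall fun x₁ => (gKer_pos t y x₁).le) (integrable_gKer π₁ hb y)]
  have hs : Function.support (fun x₁ => gKer d t y x₁) = Set.univ :=
    Set.eq_univ_of_forall fun x₁ => (gKer_pos t y x₁).ne'
  rw [hs]
  simp

lemma hasFDerivAt_phi (hb : 0 < 1 - t ^ 2) (y : EuclideanSpace ℝ (Fin d)) :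
    HasFDerivAt (phiFn d π₁ t) (∫ x₁, Dg d t y x₁ ∂π₁) y := by
  refine hasFDerivAt_integral_of_dominated_of_fderiv_le
    (F := fun z x₁ => gKer d t z x₁) (F' := fun z x₁ => Dg d t z x₁)
    (bound := fun _ => Real.sqrt (1 - t ^ 2)⁻¹) (x₀ := y) (s := Metric.ball y 1) (Metric.ball_mem_nhds y one_pos) ?_ ?_ ?_ ?_ ?_ ?_
  · filter_upwards with z using (continuous_gKer t z).aestronglyMeasurable
  · exact integrable_gKer π₁ hb y
  · exact (continuous_Dg t y).aestronglyMeasurable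
  · filter_upwards with x₁ z _ using norm_Dg_le hb z x₁
  · exact integrable_const _
  · filter_upwards with x₁ z _ using hasFDerivAt_gKer t x₁ z

lemma hasFDerivAt_IFn (hb : 0 < 1 - t ^ 2)
    (hsupp : ∀ᵐ x₁ ∂π₁, ∀ i, x₁ i ∈ Set.Icc (0 : ℝ) 1)
    (y : EuclideanSpace ℝ (Fin d)) :
    HasFDerivAt (IFn d π₁ t) (∫ x₁, (Dg d t y x₁).smulRight x₁ ∂π₁) y := by
  refine hasFDerivAt_integral_of_dominated_of_fderiv_le
    (F := fun z x₁ => gKer d t z x₁ • x₁) (F' := fun z x₁ => (Dg d t z x₁).smulRight x₁)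
    (bound := fun _ => Real.sqrt (1 - t ^ 2)⁻¹ * Real.sqrt d) (x₀ := y) (s := Metric.ball y 1)
    (Metric.ball_mem_nhds y one_pos) ?_ ?_ ?_ ?_ ?_ ?_
  · filter_upwards with z using ((continuous_gKer t z).smul continuous_id).aestronglyMeasurable
  · exact integrable_gSmul π₁ hb hsupp y
  · exact (((ContinuousLinearMap.smulRightL ℝ (EuclideanSpace ℝ (Fin d))
        (EuclideanSpace ℝ (Fin d))).continuous₂.comp
      ((continuous_Dg t y).prodMk continuous_id)).aestronglyMeasurable)
  · filter_upwards [hsupp] with x₁ hx₁ z _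
    rw [ContinuousLinearMap.norm_smulRight_apply]
    exact mul_le_mul (norm_Dg_le hb z x₁) (norm_le_sqrt_dim hx₁) (norm_nonneg _)
      (Real.sqrt_nonneg _)
  · exact integrable_const _
  · filter_upwards with x₁ z _
    have h := (hasFDerivAt_gKer t x₁ z).fun_smul (hasFDerivAt_const x₁ z)
    simpa using h

end Integrability

/-- The inner-product pairing as a continuous linear map. -/
noncomputable def Tmap (d : ℕ) :
    EuclideanSpace ℝ (Fin d) →L[ℝ] EuclideanSpace ℝ (Fin d) →L[ℝ] ℝ := innerSL ℝ

section LogDeriv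

variable {d : ℕ} {t : ℝ} (π₁ : Measure (EuclideanSpace ℝ (Fin d))) [IsProbabilityMeasure π₁]

lemma Dphi_eq (hb : 0 < 1 - t ^ 2)
    (hsupp : ∀ᵐ x₁ ∂π₁, ∀ i, x₁ i ∈ Set.Icc (0 : ℝ) 1)
    (y : EuclideanSpace ℝ (Fin d)) :
    (∫ x₁, Dg d t y x₁ ∂π₁)
      = Tmap d ((-(1 - t ^ 2)⁻¹ * phiFn d π₁ t y) • y
          + ((1 - t ^ 2)⁻¹ * t) • IFn d π₁ t y) := by
  ext v
  rw [ContinuousLinearMap.integral_apply (integrable_Dg π₁ hb y)]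
  have hpt : ∀ x₁ : EuclideanSpace ℝ (Fin d),
      Dg d t y x₁ v = (-(1 - t ^ 2)⁻¹ * (inner ℝ y v : ℝ)) * gKer d t y x₁
        + ((1 - t ^ 2)⁻¹ * t) * (innerSL ℝ v (gKer d t y x₁ • x₁)) := by
    intro x₁
    simp only [Dg, ContinuousLinearMap.smul_apply, innerSL_apply_apply, smul_eq_mul,
      inner_sub_left, real_inner_smul_left, real_inner_smul_right]
    rw [real_inner_comm v x₁]
    ring
  rw [integral_congr_ae (Filter.Eventually.of_forall hpt)]
  rw [integral_add ((integrable_gKer π₁ hb y).const_mul _)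
    ((((innerSL ℝ v).integrable_comp (integrable_gSmul π₁ hb hsupp y))).const_mul _),
    integral_const_mul, integral_const_mul,
    (innerSL ℝ v).integral_comp_comm (integrable_gSmul π₁ hb hsupp y)]
  have : (Tmap d ((-(1 - t ^ 2)⁻¹ * phiFn d π₁ t y) • y
      + ((1 - t ^ 2)⁻¹ * t) • IFn d π₁ t y)) v
      = (-(1 - t ^ 2)⁻¹ * phiFn d π₁ t y) * (inner ℝ y v : ℝ)
        + ((1 - t ^ 2)⁻¹ * t) * (inner ℝ (IFn d π₁ t y) v : ℝ) := by
    rw [map_add, (Tmap d).map_smul, (Tmap d).map_smul]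
    simp only [ContinuousLinearMap.add_apply, ContinuousLinearMap.coe_smul', Pi.smul_apply,
      smul_eq_mul]
    rfl
  rw [this, phiFn, IFn, real_inner_comm v (∫ x₁, gKer d t y x₁ • x₁ ∂π₁)]
  simp only [innerSL_apply_apply]
  ring

lemma hasFDerivAt_log_phi (hb : 0 < 1 - t ^ 2)
    (hsupp : ∀ᵐ x₁ ∂π₁, ∀ i, x₁ i ∈ Set.Icc (0 : ℝ) 1)
    (y : EuclideanSpace ℝ (Fin d)) :
    HasFDerivAt (fun z => Real.log (phiFn d π₁ t z))
      (Tmap d ((-(1 - t ^ 2)⁻¹) • y + ((1 - t ^ 2)⁻¹ * t) • mFn d π₁ t y)) y := by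
  have hP : 0 < phiFn d π₁ t y := phi_pos π₁ y hb
  have h := (hasFDerivAt_phi π₁ hb y).log hP.ne'
  rw [Dphi_eq π₁ hb hsupp y, ← (Tmap d).map_smul] at h
  refine h.congr_fderiv (congrArg (Tmap d) ?_).symm
  rw [smul_add, smul_smul, smul_smul, mFn, IFn, smul_smul]
  congr 1
  · congr 1
    field_simp
  · congr 1
    ring

end LogDeriv

section Coord

variable {d : ℕ} {t : ℝ} (π₁ : Measure (EuclideanSpace ℝ (Fin d))) [IsProbabilityMeasure π₁]

lemma gSmul_integral_apply (hb : 0 < 1 - t ^ 2)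
    (hsupp : ∀ᵐ x₁ ∂π₁, ∀ i, x₁ i ∈ Set.Icc (0 : ℝ) 1)
    (y : EuclideanSpace ℝ (Fin d)) (k : Fin d) :
    (∫ x₁, gKer d t y x₁ • x₁ ∂π₁) k = ∫ x₁, gKer d t y x₁ * x₁ k ∂π₁ := by
  calc (∫ x₁, gKer d t y x₁ • x₁ ∂π₁) k
      = EuclideanSpace.proj k (∫ x₁, gKer d t y x₁ • x₁ ∂π₁) := rfl
    _ = ∫ x₁, EuclideanSpace.proj k (gKer d t y x₁ • x₁) ∂π₁ :=
        ((EuclideanSpace.proj k).integral_comp_comm (integrable_gSmul π₁ hb hsupp y)).symm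
    _ = ∫ x₁, gKer d t y x₁ * x₁ k ∂π₁ := rfl

lemma Dg_single (y x₁ : EuclideanSpace ℝ (Fin d)) (i : Fin d) :
    Dg d t y x₁ (EuclideanSpace.single i 1)
      = -(1 - t ^ 2)⁻¹ * gKer d t y x₁ * (y i - t * x₁ i) := by
  simp only [Dg, ContinuousLinearMap.smul_apply, innerSL_apply_apply, smul_eq_mul]
  have h : (inner ℝ (y - t • x₁) (EuclideanSpace.single i (1 : ℝ)) : ℝ) = y i - t * x₁ i := by
    simp [EuclideanSpace.inner_single_right, PiLp.sub_apply, PiLp.smul_apply, smul_eq_mul]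
  rw [h]

lemma Dphi_single (hb : 0 < 1 - t ^ 2)
    (hsupp : ∀ᵐ x₁ ∂π₁, ∀ i, x₁ i ∈ Set.Icc (0 : ℝ) 1)
    (x : EuclideanSpace ℝ (Fin d)) (i : Fin d) :
    (∫ x₁, Dg d t x x₁ ∂π₁) (EuclideanSpace.single i 1)
      = -(1 - t ^ 2)⁻¹ * x i * phiFn d π₁ t x
        + (1 - t ^ 2)⁻¹ * t * ∫ x₁, gKer d t x x₁ * x₁ i ∂π₁ := by
  rw [ContinuousLinearMap.integral_apply (integrable_Dg π₁ hb x)]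
  have hpt : ∀ x₁ : EuclideanSpace ℝ (Fin d),
      Dg d t x x₁ (EuclideanSpace.single i 1)
        = (-(1 - t ^ 2)⁻¹ * x i) * gKer d t x x₁
          + ((1 - t ^ 2)⁻¹ * t) * (gKer d t x x₁ * x₁ i) := by
    intro x₁; rw [Dg_single]; ring
  rw [integral_congr_ae (Filter.Eventually.of_forall hpt),
    integral_add ((integrable_gKer π₁ hb x).const_mul _)
      ((integrable_gMul π₁ hb hsupp x i).const_mul _),
    integral_const_mul, integral_const_mul, phiFn]

lemma DI_single (hb : 0 < 1 - t ^ 2)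
    (hsupp : ∀ᵐ x₁ ∂π₁, ∀ i, x₁ i ∈ Set.Icc (0 : ℝ) 1)
    (x : EuclideanSpace ℝ (Fin d)) (i j : Fin d) :
    (∫ x₁, (Dg d t x x₁).smulRight x₁ ∂π₁) (EuclideanSpace.single i 1) j
      = -(1 - t ^ 2)⁻¹ * x i * (∫ x₁, gKer d t x x₁ * x₁ j ∂π₁)
        + (1 - t ^ 2)⁻¹ * t * ∫ x₁, gKer d t x x₁ * (x₁ i * x₁ j) ∂π₁ := by
  rw [ContinuousLinearMap.integral_apply (integrable_DgSmulRight π₁ hb hsupp x)]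
  have hint : Integrable
      (fun x₁ => ((Dg d t x x₁).smulRight x₁) (EuclideanSpace.single i 1)) π₁ :=
    (integrable_DgSmulRight π₁ hb hsupp x).apply_continuousLinearMap _
  calc (∫ x₁, ((Dg d t x x₁).smulRight x₁) (EuclideanSpace.single i 1) ∂π₁) j
      = EuclideanSpace.proj j
          (∫ x₁, ((Dg d t x x₁).smulRight x₁) (EuclideanSpace.single i 1) ∂π₁) := rfl
    _ = ∫ x₁, EuclideanSpace.proj j
          (((Dg d t x x₁).smulRight x₁) (EuclideanSpace.single i 1)) ∂π₁ :=
        ((EuclideanSpace.proj j).integral_comp_comm hint).symm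
    _ = ∫ x₁, (Dg d t x x₁ (EuclideanSpace.single i 1)) * x₁ j ∂π₁ := rfl
    _ = ∫ x₁, ((-(1 - t ^ 2)⁻¹ * x i) * (gKer d t x x₁ * x₁ j)
          + ((1 - t ^ 2)⁻¹ * t) * (gKer d t x x₁ * (x₁ i * x₁ j))) ∂π₁ := by
        refine integral_congr_ae (Filter.Eventually.of_forall fun x₁ => ?_)
        show (Dg d t x x₁) (EuclideanSpace.single i 1) * x₁ j = _
        rw [Dg_single]
        ring
    _ = -(1 - t ^ 2)⁻¹ * x i * (∫ x₁, gKer d t x x₁ * x₁ j ∂π₁)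
        + (1 - t ^ 2)⁻¹ * t * ∫ x₁, gKer d t x x₁ * (x₁ i * x₁ j) ∂π₁ := by
        rw [integral_add ((integrable_gMul π₁ hb hsupp x j).const_mul _)
          ((integrable_gMul2 π₁ hb hsupp x i j).const_mul _),
          integral_const_mul, integral_const_mul]

lemma Tmap_single (u : EuclideanSpace ℝ (Fin d)) (k : Fin d) :
    Tmap d u (EuclideanSpace.single k 1) = u k := by
  show (inner ℝ u (EuclideanSpace.single k (1 : ℝ)) : ℝ) = u k
  simp [EuclideanSpace.inner_single_right]

end Coord

/-- For every `t ∈ [0,1)` and every `x`, `log φ_t` is twice differentiable at `x` and its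
Hessian is `∇²ₓ log φ_t(x) = -(1/(1-t²)) I_d + (t²/(1-t²)²) Cov_t(x)`. -/
theorem hessian_log_phi
    (d : ℕ) (hd : 1 ≤ d)
    (π₁ : Measure (EuclideanSpace ℝ (Fin d))) [IsProbabilityMeasure π₁]
    (hsupp : ∀ᵐ x₁ ∂π₁, ∀ i, x₁ i ∈ Set.Icc (0 : ℝ) 1)
    (t : ℝ) (ht : t ∈ Set.Ico (0 : ℝ) 1) (x : EuclideanSpace ℝ (Fin d)) :
    DifferentiableAt ℝ (fun y => Real.log (phiFn d π₁ t y)) x ∧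
    DifferentiableAt ℝ (fun y => fderiv ℝ (fun z => Real.log (phiFn d π₁ t z)) y) x ∧
    ∀ i j : Fin d,
      fderiv ℝ (fun y => fderiv ℝ (fun z => Real.log (phiFn d π₁ t z)) y) x
          (EuclideanSpace.single i 1) (EuclideanSpace.single j 1)
        = ((-(1 / (1 - t ^ 2))) • (1 : Matrix (Fin d) (Fin d) ℝ)
            + (t ^ 2 / (1 - t ^ 2) ^ 2) • covMat d π₁ t x) i j := by
  obtain ⟨ht0, ht1⟩ := ht
  have hb : 0 < 1 - t ^ 2 := by nlinarith
  have hfd : (fun y => fderiv ℝ (fun z => Real.log (phiFn d π₁ t z)) y)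
      = fun y => Tmap d ((-(1 - t ^ 2)⁻¹) • y + ((1 - t ^ 2)⁻¹ * t) • mFn d π₁ t y) :=
    funext fun y => (hasFDerivAt_log_phi π₁ hb hsupp y).fderiv
  have hP : 0 < phiFn d π₁ t x := phi_pos π₁ x hb
  have hφx := hasFDerivAt_phi π₁ hb x
  have hIx := hasFDerivAt_IFn π₁ hb hsupp x
  have hinv : HasFDerivAt (fun y => (phiFn d π₁ t y)⁻¹)
      ((-(phiFn d π₁ t x ^ 2)⁻¹) • (∫ x₁, Dg d t x x₁ ∂π₁)) x :=
    (hasDerivAt_inv hP.ne').comp_hasFDerivAt x hφx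
  have hm : HasFDerivAt (mFn d π₁ t)
      ((phiFn d π₁ t x)⁻¹ • (∫ x₁, (Dg d t x x₁).smulRight x₁ ∂π₁)
        + ((-(phiFn d π₁ t x ^ 2)⁻¹) • (∫ x₁, Dg d t x x₁ ∂π₁)).smulRight
            (IFn d π₁ t x)) x := by
    have h := hinv.smul hIx
    exact h
  have hw : HasFDerivAt
      (fun y => (-(1 - t ^ 2)⁻¹) • y + ((1 - t ^ 2)⁻¹ * t) • mFn d π₁ t y)
      ((-(1 - t ^ 2)⁻¹) • ContinuousLinearMap.id ℝ (EuclideanSpace ℝ (Fin d))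
        + ((1 - t ^ 2)⁻¹ * t) •
          ((phiFn d π₁ t x)⁻¹ • (∫ x₁, (Dg d t x x₁).smulRight x₁ ∂π₁)
            + ((-(phiFn d π₁ t x ^ 2)⁻¹) • (∫ x₁, Dg d t x x₁ ∂π₁)).smulRight
                (IFn d π₁ t x))) x :=
    ((hasFDerivAt_id x).fun_const_smul _).fun_add (hm.fun_const_smul _)
  have hB : HasFDerivAt
      (fun y => Tmap d ((-(1 - t ^ 2)⁻¹) • y + ((1 - t ^ 2)⁻¹ * t) • mFn d π₁ t y))
      ((Tmap d).comp
        ((-(1 - t ^ 2)⁻¹) • ContinuousLinearMap.id ℝ (EuclideanSpace ℝ (Fin d))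
          + ((1 - t ^ 2)⁻¹ * t) •
            ((phiFn d π₁ t x)⁻¹ • (∫ x₁, (Dg d t x x₁).smulRight x₁ ∂π₁)
              + ((-(phiFn d π₁ t x ^ 2)⁻¹) • (∫ x₁, Dg d t x x₁ ∂π₁)).smulRight
                  (IFn d π₁ t x)))) x :=
    ((Tmap d).hasFDerivAt).comp x hw
  refine ⟨(hasFDerivAt_log_phi π₁ hb hsupp x).differentiableAt, ?_, ?_⟩
  · rw [hfd]
    exact hB.differentiableAt
  · intro i j
    rw [hfd, hB.fderiv, ContinuousLinearMap.comp_apply, Tmap_single]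
    simp only [ContinuousLinearMap.add_apply, ContinuousLinearMap.coe_smul', Pi.smul_apply,
      ContinuousLinearMap.coe_id', id_eq, ContinuousLinearMap.smulRight_apply,
      ContinuousLinearMap.smul_apply, PiLp.add_apply, PiLp.smul_apply, smul_eq_mul,
      EuclideanSpace.single_apply]
    rw [Dphi_single π₁ hb hsupp x i, DI_single π₁ hb hsupp x i j]
    have hIapp : IFn d π₁ t x j = ∫ x₁, gKer d t x x₁ * x₁ j ∂π₁ :=
      gSmul_integral_apply π₁ hb hsupp x j
    rw [hIapp]
    simp only [Matrix.add_apply, Matrix.smul_apply, Matrix.one_apply, covMat, MMat, mFn,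
      Matrix.sub_apply, Matrix.of_apply, smul_eq_mul, PiLp.smul_apply]
    rw [gSmul_integral_apply π₁ hb hsupp x i, gSmul_integral_apply π₁ hb hsupp x j]
    have hPne : phiFn d π₁ t x ≠ 0 := hP.ne'
    have hbne : (1 - t ^ 2) ≠ 0 := hb.ne'
    by_cases hij : i = j
    · subst hij
      simp only [if_pos rfl]
      field_simp
      ring
    · simp only [if_neg hij, if_neg (Ne.symm hij)]
      field_simp
      ring
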